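/- If p = k/(k+1) then z = k/(k+1) is a double-point degeneracy of the partial-fraction expansion: the root λ_0 = k/(k+1) satisfies A(k/(k+1)) = 0, and the pmf is f_k(n) = (p^k/(k+1)) (2 λ_0^{n-k} + Σ_{j=1}^{k-1} λ_j^{n-k}) for n ≥ k. -/

import Mathlib

open Finset

attribute [local instance] Classical.propDecidable

/-- `hasRunEnd k n ω m` : in the outcome string `ω` of `n` Bernoulli trials, a run of
`k` consecutive successes ends at trial `m` (trials `m-k+1, ..., m` are successes). -/
def hasRunEnd (k n : ℕ) (ω : Fin n → Bool) (m : ℕ) : Prop :=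
  k ≤ m ∧ m ≤ n ∧ ∀ j : Fin n, m - k ≤ (j : ℕ) → (j : ℕ) < m → ω j = true

/-- The first run of `k` consecutive successes is completed exactly at trial `n`. -/
def firstRun (k n : ℕ) (ω : Fin n → Bool) : Prop :=
  hasRunEnd k n ω n ∧ ∀ m < n, ¬ hasRunEnd k n ω m

/-- The pmf of the geometric distribution of order `k`:
`fk k p n = P(N_k = n)` where `N_k` is the waiting time for the first run of `k`
consecutive successes in i.i.d. Bernoulli(`p`) trials; each outcome string contributes
`p^{#successes} (1-p)^{#failures}`. -/
noncomputable def fk (k : ℕ) (p : ℝ) (n : ℕ) : ℝ :=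
  ∑ ω ∈ Finset.univ.filter (fun ω : Fin n → Bool => firstRun k n ω),
    p ^ (Finset.univ.filter (fun i => ω i = true)).card *
      (1 - p) ^ (Finset.univ.filter (fun i => ω i = false)).card

noncomputable def wgt (p : ℝ) {m : ℕ} (ω : Fin m → Bool) : ℝ :=
  ∏ i, if ω i = true then p else (1 - p)

noncomputable def fsum (p : ℝ) {m : ℕ} (P : (Fin m → Bool) → Prop) : ℝ :=
  ∑ ω : Fin m → Bool, if P ω then wgt p ω else 0

lemma fsum_congr (p : ℝ) {m : ℕ} {P Q : (Fin m → Bool) → Prop}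
    (h : ∀ ω, P ω ↔ Q ω) : fsum p P = fsum p Q := by
  unfold fsum
  exact Finset.sum_congr rfl fun ω _ => by
    by_cases hp : P ω
    · rw [if_pos hp, if_pos ((h ω).mp hp)]
    · rw [if_neg hp, if_neg (fun hq => hp ((h ω).mpr hq))]

lemma fsum_or (p : ℝ) {m : ℕ} {P Q : (Fin m → Bool) → Prop}
    (h : ∀ ω, ¬ (P ω ∧ Q ω)) :
    fsum p (fun ω => P ω ∨ Q ω) = fsum p P + fsum p Q := by
  unfold fsum
  rw [← Finset.sum_add_distrib]
  refine Finset.sum_congr rfl fun ω _ => ?_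
  by_cases hp : P ω
  · rw [if_pos (Or.inl hp), if_pos hp, if_neg (fun hq => h ω ⟨hp, hq⟩), add_zero]
  · by_cases hq : Q ω
    · rw [if_pos (Or.inr hq), if_neg hp, if_pos hq, zero_add]
    · rw [if_neg (by tauto), if_neg hp, if_neg hq, add_zero]


lemma wgt_eq (p : ℝ) {m : ℕ} (ω : Fin m → Bool) :
    p ^ (Finset.univ.filter (fun i => ω i = true)).card *
      (1 - p) ^ (Finset.univ.filter (fun i => ω i = false)).card = wgt p ω := by
  rw [wgt, Finset.prod_ite, Finset.prod_const, Finset.prod_const]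
  have hfil : (Finset.univ.filter fun i => ¬ ω i = true) =
      Finset.univ.filter (fun i : Fin m => ω i = false) := by
    apply Finset.filter_congr; intro i _; simp
  rw [hfil]

lemma fk_eq_wgt (k : ℕ) (p : ℝ) (n : ℕ) :
    fk k p n = fsum p (firstRun k n) := by
  rw [fk, fsum, Finset.sum_filter]
  exact Finset.sum_congr rfl fun ω _ => by
    by_cases h : firstRun k n ω
    · rw [if_pos h, if_pos h, wgt_eq]
    · rw [if_neg h, if_neg h]

def noRun (k m : ℕ) (ω : Fin m → Bool) : Prop := ∀ l, ¬ hasRunEnd k m ω l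

noncomputable def gg (k : ℕ) (p : ℝ) (m : ℕ) : ℝ := fsum p (noRun k m)

noncomputable def joinE (a b : ℕ) : ((Fin a → Bool) × (Fin b → Bool)) ≃ (Fin (a+b) → Bool) :=
  (Equiv.sumArrowEquivProdArrow (Fin a) (Fin b) Bool).symm.trans
    (Equiv.arrowCongr finSumFinEquiv (Equiv.refl Bool))

lemma joinE_castAdd {a b : ℕ} (x : (Fin a → Bool) × (Fin b → Bool)) (i : Fin a) :
    joinE a b x (Fin.castAdd b i) = x.1 i := by
  simp [joinE, Equiv.sumArrowEquivProdArrow, Equiv.arrowCongr]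

lemma joinE_natAdd {a b : ℕ} (x : (Fin a → Bool) × (Fin b → Bool)) (i : Fin b) :
    joinE a b x (Fin.natAdd a i) = x.2 i := by
  simp [joinE, Equiv.sumArrowEquivProdArrow, Equiv.arrowCongr]

lemma wgt_join (p : ℝ) {a b : ℕ} (x : (Fin a → Bool) × (Fin b → Bool)) :
    wgt p (joinE a b x) = wgt p x.1 * wgt p x.2 := by
  rw [wgt, Fin.prod_univ_add]
  congr 1
  · exact Finset.prod_congr rfl fun i _ => by rw [joinE_castAdd]
  · exact Finset.prod_congr rfl fun i _ => by rw [joinE_natAdd]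

lemma sum_split (p : ℝ) (a b : ℕ) (P : (Fin (a+b) → Bool) → Prop)
    (Q : (Fin a → Bool) → Prop) (R : (Fin b → Bool) → Prop)
    (h : ∀ ω : Fin (a+b) → Bool,
      P ω ↔ Q (fun i => ω (Fin.castAdd b i)) ∧ R (fun i => ω (Fin.natAdd a i))) :
    fsum p P = fsum p Q * fsum p R := by
  unfold fsum
  rw [Finset.sum_mul_sum, ← Fintype.sum_prod_type']
  refine (Fintype.sum_equiv (joinE a b) _ _ fun x => ?_).symm
  have h1 : (fun i => joinE a b x (Fin.castAdd b i)) = x.1 := funext fun i => joinE_castAdd x i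
  have h2 : (fun i => joinE a b x (Fin.natAdd a i)) = x.2 := funext fun i => joinE_natAdd x i
  rw [h (joinE a b x), h1, h2, wgt_join]
  by_cases hq : Q x.1 <;> by_cases hr : R x.2 <;> simp [hq, hr]

lemma fsum_false (p : ℝ) {m : ℕ} : fsum p (fun _ : Fin m → Bool => False) = 0 := by
  unfold fsum
  exact Finset.sum_eq_zero fun ω _ => if_neg not_false

lemma fsum_single (p : ℝ) {m : ℕ} (c : Fin m → Bool) :
    fsum p (fun ω => ω = c) = wgt p c := by
  unfold fsum
  refine (Fintype.sum_eq_single c fun ω hω => ?_).trans ?_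
  · exact if_neg hω
  · exact if_pos rfl

lemma sum_wgt (p : ℝ) : ∀ m : ℕ, (∑ ω : Fin m → Bool, wgt p ω) = 1 := by
  intro m
  induction m with
  | zero =>
    have h1 : ∀ ω : Fin 0 → Bool, wgt p ω = 1 := fun ω => by
      rw [wgt, Finset.univ_eq_empty, Finset.prod_empty]
    rw [Finset.sum_congr rfl fun ω _ => h1 ω, Finset.sum_const, nsmul_eq_mul, mul_one]
    norm_num [Finset.card_univ]
  | succ m ih =>
    have h2 : (∑ τ : Fin 1 → Bool, wgt p τ) = 1 := by
      have hw : ∀ τ : Fin 1 → Bool, wgt p τ = if τ 0 = true then p else 1 - p := fun τ => by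
        rw [wgt, Fin.prod_univ_one]
      rw [Finset.sum_congr rfl fun τ _ => hw τ,
        ← Equiv.sum_comp (Equiv.funUnique (Fin 1) Bool).symm
          (fun τ : Fin 1 → Bool => if τ 0 = true then p else 1 - p)]
      simp
    calc (∑ ω : Fin (m+1) → Bool, wgt p ω)
        = ∑ x : (Fin m → Bool) × (Fin 1 → Bool), wgt p x.1 * wgt p x.2 :=
          (Fintype.sum_equiv (joinE m 1) _ _ fun x => (wgt_join p x).symm).symm
      _ = (∑ σ : Fin m → Bool, wgt p σ) * (∑ τ : Fin 1 → Bool, wgt p τ) := by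
          rw [Finset.sum_mul_sum, ← Fintype.sum_prod_type']
      _ = 1 := by rw [ih, h2, mul_one]

lemma fsum_true (p : ℝ) {m : ℕ} : fsum p (fun _ : Fin m → Bool => True) = 1 := by
  unfold fsum
  exact (Finset.sum_congr rfl fun ω _ => if_pos trivial).trans (sum_wgt p m)

lemma hasRunEnd_prefix {k a b : ℕ} (ω : Fin (a+b) → Bool) (l : ℕ) (hl : l ≤ a) :
    hasRunEnd k (a+b) ω l ↔ hasRunEnd k a (fun i => ω (Fin.castAdd b i)) l := by
  unfold hasRunEnd
  constructor
  · rintro ⟨h1, -, h3⟩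
    refine ⟨h1, hl, fun j hj1 hj2 => ?_⟩
    exact h3 (Fin.castAdd b j) (by simpa using hj1) (by simp only [Fin.coe_castAdd]; omega)
  · rintro ⟨h1, -, h3⟩
    refine ⟨h1, by omega, fun j hj1 hj2 => ?_⟩
    have hja : (j:ℕ) < a := lt_of_lt_of_le hj2 hl
    have := h3 ⟨(j:ℕ), hja⟩ hj1 hj2
    simpa [show Fin.castAdd b ⟨(j:ℕ), hja⟩ = j from Fin.ext rfl] using this

lemma firstRun_iff {k : ℕ} (hk : 1 ≤ k) (a : ℕ) (ω : Fin (a+(k+1)) → Bool) :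
    firstRun k (a+(k+1)) ω ↔
      noRun k a (fun i => ω (Fin.castAdd (k+1) i)) ∧
        ((fun j => ω (Fin.natAdd a j)) = fun j : Fin (k+1) => decide (0 < (j:ℕ))) := by
  constructor
  · rintro ⟨⟨-, -, hwin⟩, hmin⟩
    constructor
    · intro l hr
      have hla : l ≤ a := hr.2.1
      exact hmin l (by omega) ((hasRunEnd_prefix ω l hla).mpr hr)
    · funext j
      by_cases hj : 0 < (j:ℕ)
      · have ht : ω (Fin.natAdd a j) = true := by
          refine hwin (Fin.natAdd a j) ?_ ?_ <;> simp only [Fin.coe_natAdd] <;> omega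
        simp [ht, hj]
      · have hj0 : (j:ℕ) = 0 := by omega
        cases hval : ω (Fin.natAdd a j) with
        | false => simp [hj0]
        | true =>
          exfalso
          refine hmin (a+k) (by omega) ⟨by omega, by omega, fun i hi1 hi2 => ?_⟩
          rcases Nat.eq_or_lt_of_le hi1 with heq|hlt
          · have : Fin.natAdd a j = i := Fin.ext (by simp only [Fin.coe_natAdd]; omega)
            rw [← this]; exact hval
          · exact hwin i (by omega) (by omega)
  · rintro ⟨hnr, hpat⟩
    have hpat' : ∀ j : Fin (k+1), ω (Fin.natAdd a j) = decide (0 < (j:ℕ)) :=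
      fun j => congrFun hpat j
    constructor
    · refine ⟨by omega, le_rfl, fun i hi1 hi2 => ?_⟩
      have hia : a < (i:ℕ) := by omega
      have hjlt : (i:ℕ) - a < k+1 := by omega
      have heq : Fin.natAdd a ⟨(i:ℕ) - a, hjlt⟩ = i :=
        Fin.ext (by simp only [Fin.coe_natAdd]; omega)
      have := hpat' ⟨(i:ℕ) - a, hjlt⟩
      rw [heq] at this
      rw [this]
      simp only [decide_eq_true_eq]
      omega
    · intro l hln hr
      rcases le_or_gt l a with hla|hla
      · exact hnr l ((hasRunEnd_prefix ω l hla).mp hr)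
      · have hwin := hr.2.2
        have h1 : k ≤ l := hr.1
        have h2 : l ≤ a + (k+1) := hr.2.1
        have := hwin (Fin.natAdd a 0) (by simp only [Fin.coe_natAdd, Fin.val_zero]; omega)
          (by simp only [Fin.coe_natAdd, Fin.val_zero]; omega)
        rw [hpat' 0] at this
        simp at this

lemma gg_zero (k : ℕ) (hk : 1 ≤ k) (p : ℝ) : gg k p 0 = 1 := by
  have hnr : ∀ ω : Fin 0 → Bool, noRun k 0 ω := by
    intro ω l hr
    have := hr.1; have := hr.2.1; omega
  rw [gg, fsum_congr p (Q := fun _ => True) (fun ω => by simp [hnr ω]), fsum_true]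

lemma fk_zero_of_lt (k : ℕ) (p : ℝ) (n : ℕ) (hn : n < k) : fk k p n = 0 := by
  rw [fk_eq_wgt, fsum_congr p (Q := fun _ => False)
    (fun ω => by constructor
                 · intro hfr; have := hfr.1.1; omega
                 · intro h; exact absurd h not_false), fsum_false]

lemma fk_at_k (k : ℕ) (hk : 1 ≤ k) (p : ℝ) : fk k p k = p ^ k := by
  rw [fk_eq_wgt]
  have h1 : fsum p (firstRun k k) = fsum p (fun ω : Fin k → Bool => ω = fun _ => true) := by
    apply fsum_congr
    intro ω
    constructor
    · intro h
      funext j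
      exact h.1.2.2 j (by omega) j.isLt
    · rintro rfl
      exact ⟨⟨le_rfl, le_rfl, fun j _ _ => rfl⟩, fun m hm hr => absurd hr.1 (by omega)⟩
  rw [h1, fsum_single, wgt]
  simp

lemma gg_succ (k : ℕ) (hk : 1 ≤ k) (p : ℝ) (m : ℕ) :
    gg k p m = gg k p (m+1) + fk k p (m+1) := by
  have hequiv : ∀ ω : Fin (m+1) → Bool,
      (noRun k (m+1) ω ∨ firstRun k (m+1) ω) ↔
        noRun k m (fun i => ω (Fin.castAdd 1 i)) ∧
          (fun _ : Fin 1 → Bool => True) (fun i => ω (Fin.natAdd m i)) := by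
    intro ω
    simp only [iff_true_intro trivial, and_true]
    have key : (noRun k (m+1) ω ∨ firstRun k (m+1) ω) ↔ (∀ l ≤ m, ¬ hasRunEnd k (m+1) ω l) := by
      constructor
      · rintro (hnr|hfr) l hl
        · exact hnr l
        · exact hfr.2 l (by omega)
      · intro hP
        by_cases hE : hasRunEnd k (m+1) ω (m+1)
        · exact Or.inr ⟨hE, fun l hl => hP l (by omega)⟩
        · refine Or.inl (fun l => ?_)
          rcases lt_trichotomy l (m+1) with h|rfl|h
          · exact hP l (by omega)
          · exact hE
          · exact fun hr => absurd hr.2.1 (by omega)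
    rw [key]
    constructor
    · intro h l hr
      exact h l hr.2.1 ((hasRunEnd_prefix ω l hr.2.1).mpr hr)
    · intro h l hl hr
      exact h l ((hasRunEnd_prefix ω l hl).mp hr)
  have hsplit := sum_split p m 1 (fun ω => noRun k (m+1) ω ∨ firstRun k (m+1) ω)
    (noRun k m) (fun _ => True) hequiv
  have hone : fsum p (fun _ : Fin 1 → Bool => True) = 1 := fsum_true p
  have hdisj : ∀ ω : Fin (m+1) → Bool, ¬ (noRun k (m+1) ω ∧ firstRun k (m+1) ω) := by
    rintro ω ⟨h1, h2⟩
    exact h1 (m+1) h2.1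
  have := fsum_or p hdisj
  rw [this] at hsplit
  rw [hone, mul_one] at hsplit
  rw [gg, gg, fk_eq_wgt]
  exact hsplit.symm

lemma fk_step (k : ℕ) (hk : 1 ≤ k) (p : ℝ) (a : ℕ) :
    fk k p (a + (k+1)) = (1 - p) * p ^ k * gg k p a := by
  rw [fk_eq_wgt]
  have hsplit := sum_split p a (k+1) (firstRun k (a+(k+1))) (noRun k a)
    (fun τ => τ = fun j : Fin (k+1) => decide (0 < (j:ℕ))) (firstRun_iff hk a)
  rw [hsplit]
  have hpat : fsum p (fun τ : Fin (k+1) → Bool => τ = fun j : Fin (k+1) => decide (0 < (j:ℕ)))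
      = (1 - p) * p ^ k := by
    rw [fsum_single, wgt, Fin.prod_univ_succ]
    simp
  rw [hpat, gg]
  ring

lemma gg_lt_k (k : ℕ) (hk : 1 ≤ k) (p : ℝ) : ∀ m, m < k → gg k p m = 1 := by
  intro m
  induction m with
  | zero => intro _; exact gg_zero k hk p
  | succ m ih =>
    intro hm
    have h1 := gg_succ k hk p m
    rw [fk_zero_of_lt k p (m+1) hm, ih (by omega)] at h1
    linarith

section AlgPart
open Polynomial

lemma telescope (k : ℕ) (p q z : ℂ) (hpq : p + q = 1) :
    (z - p) * (z^k - ∑ i ∈ Finset.Icc 1 k, q * p^(i-1) * z^(k-i))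
      = z^(k+1) - z^k + q * p^k := by
  have hre : ∑ i ∈ Finset.Icc 1 k, q * p^(i-1) * z^(k-i)
      = ∑ i ∈ Finset.range k, q * p^i * z^(k-1-i) := by
    rw [← Finset.Ico_add_one_right_eq_Icc, Finset.sum_Ico_eq_sum_range]
    refine Finset.sum_congr rfl fun i hi => ?_
    have h1 : 1 + i - 1 = i := by omega
    have h2 : k - (1 + i) = k - 1 - i := by omega
    rw [h1, h2]
  rw [hre, mul_sub]
  have htel : (z - p) * ∑ i ∈ Finset.range k, q * p^i * z^(k-1-i)
      = q * z^k - q * p^k := by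
    rw [Finset.mul_sum]
    have hterm : ∀ i ∈ Finset.range k,
        (z - p) * (q * p^i * z^(k-1-i))
          = (fun i => q * p^i * z^(k-i)) i - (fun i => q * p^i * z^(k-i)) (i+1) := by
      intro i hi
      have hik : i < k := Finset.mem_range.mp hi
      have hz : z^(k-i) = z * z^(k-1-i) := by
        rw [← pow_succ']
        congr 1
        omega
      have h2 : k - (i+1) = k-1-i := by omega
      simp only [h2, hz]
      ring
    rw [Finset.sum_congr rfl hterm, Finset.sum_range_sub' (fun i => q * p^i * z^(k-i)) k]
    simp
  rw [htel]
  linear_combination (-(z^k)) * hpq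

section
variable (k : ℕ) (p q : ℂ)

noncomputable def Apoly : Polynomial ℂ :=
  X^k - ∑ i ∈ Finset.Icc 1 k, C (q * p^(i-1)) * X^(k-i)

noncomputable def Bpoly : Polynomial ℂ := X^(k+1) - X^k + C (q * p^k)

lemma Apoly_eval (z : ℂ) :
    (Apoly k p q).eval z = z^k - ∑ i ∈ Finset.Icc 1 k, q * p^(i-1) * z^(k-i) := by
  simp [Apoly, eval_finset_sum]

lemma Bpoly_eval (z : ℂ) : (Bpoly k p q).eval z = z^(k+1) - z^k + q * p^k := by
  simp [Bpoly]

lemma Apoly_degreeS (hk : 1 ≤ k) :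
    (∑ i ∈ Finset.Icc 1 k, C (q * p^(i-1)) * X^(k-i) : Polynomial ℂ).degree < (k : ℕ) := by
  refine lt_of_le_of_lt (Polynomial.degree_sum_le _ _) ?_
  rw [Finset.sup_lt_iff (by exact_mod_cast WithBot.bot_lt_coe (k:ℕ))]
  intro i hi
  refine lt_of_le_of_lt (Polynomial.degree_C_mul_X_pow_le _ _) ?_
  have h1 : (1:ℕ) ≤ i := (Finset.mem_Icc.mp hi).1
  have h2 : i ≤ k := (Finset.mem_Icc.mp hi).2
  exact_mod_cast Nat.sub_lt_of_pos_le (by omega) (by omega)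

lemma Apoly_monic (hk : 1 ≤ k) : (Apoly k p q).Monic :=
  Polynomial.monic_X_pow_sub (Apoly_degreeS k p q hk)

lemma Apoly_degree (hk : 1 ≤ k) : (Apoly k p q).degree = k := by
  rw [Apoly, Polynomial.degree_sub_eq_left_of_degree_lt, Polynomial.degree_X_pow]
  rw [Polynomial.degree_X_pow]
  exact Apoly_degreeS k p q hk

lemma Apoly_natDegree (hk : 1 ≤ k) : (Apoly k p q).natDegree = k :=
  Polynomial.natDegree_eq_of_degree_eq_some (Apoly_degree k p q hk)

end

section
variable {k : ℕ} {p q : ℂ} (hk : 1 ≤ k) (lam : Fin k → ℂ)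
  (hinj : Function.Injective lam)
  (hroot : ∀ j, (lam j) ^ k - ∑ i ∈ Finset.Icc 1 k, q * p ^ (i - 1) * (lam j) ^ (k - i) = 0)

include hk hinj hroot in
lemma Apoly_prod : Apoly k p q = ∏ j : Fin k, (X - C (lam j)) := by
  classical
  have hA0 : (Apoly k p q) ≠ 0 := (Apoly_monic k p q hk).ne_zero
  have hnodup : (Finset.univ.val.map lam).Nodup :=
    Multiset.Nodup.map hinj Finset.univ.nodup
  have hsub : (Finset.univ.val.map lam) ≤ (Apoly k p q).roots := by
    rw [Multiset.le_iff_count]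
    intro c
    by_cases hc : c ∈ Finset.univ.val.map lam
    · have h1 : Multiset.count c (Finset.univ.val.map lam) = 1 :=
        Multiset.count_eq_one_of_mem hnodup hc
      rw [h1, Polynomial.count_roots]
      rw [Nat.one_le_iff_ne_zero, ← Nat.pos_iff_ne_zero]
      rw [Polynomial.rootMultiplicity_pos hA0]
      obtain ⟨j, -, rfl⟩ := Multiset.mem_map.mp hc
      show (Apoly k p q).eval (lam j) = 0
      rw [Apoly_eval]
      exact hroot j
    · rw [Multiset.count_eq_zero_of_notMem hc]
      exact Nat.zero_le _
  have hcards : Multiset.card ((Apoly k p q).roots) ≤ Multiset.card (Finset.univ.val.map lam) := by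
    rw [Multiset.card_map]
    have := Polynomial.card_roots' (Apoly k p q)
    rw [Apoly_natDegree k p q hk] at this
    simpa using this
  have heq : Finset.univ.val.map lam = (Apoly k p q).roots :=
    Multiset.eq_of_le_of_card_le hsub hcards
  have hsplit : (Apoly k p q) = ((Apoly k p q).roots.map (fun a => X - C a)).prod :=
    (IsAlgClosed.splits _).eq_prod_roots_of_monic (Apoly_monic k p q hk)
  rw [hsplit, ← heq, Multiset.map_map]
  rfl

end

section
variable {k : ℕ} {p q : ℂ} (hk : 1 ≤ k) (hpq : p + q = 1) (lam : Fin k → ℂ)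
  (hinj : Function.Injective lam)
  (hroot : ∀ j, (lam j) ^ k - ∑ i ∈ Finset.Icc 1 k, q * p ^ (i - 1) * (lam j) ^ (k - i) = 0)

include hk hpq hinj hroot in
lemma Bpoly_prod :
    ((Finset.univ.val.map (Fin.cons p lam : Fin (k+1) → ℂ)).map (fun a => X - C a)).prod
      = Bpoly k p q := by
  rw [Multiset.map_map]
  have h1 : ((Finset.univ.val.map (fun i => X - C ((Fin.cons p lam : Fin (k+1) → ℂ) i))).prod)
      = ∏ i : Fin (k+1), (X - C ((Fin.cons p lam : Fin (k+1) → ℂ) i)) := rfl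
  rw [Function.comp_def, h1, Fin.prod_univ_succ]
  simp only [Fin.cons_zero, Fin.cons_succ]
  rw [← Apoly_prod hk lam hinj hroot]
  apply Polynomial.funext
  intro z
  rw [Bpoly_eval]
  simp only [Polynomial.eval_mul, Polynomial.eval_sub, Polynomial.eval_X, Polynomial.eval_C]
  rw [Apoly_eval]
  exact telescope k p q z hpq

include hk hpq hinj hroot in
lemma esymm_val :
    ∀ i, 1 ≤ i → i ≤ k →
      (Finset.univ.val.map (Fin.cons p lam : Fin (k+1) → ℂ)).esymm i
        = if i = 1 then 1 else 0 := by
  intro i hi1 hik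
  have hcard : Multiset.card (Finset.univ.val.map (Fin.cons p lam : Fin (k+1) → ℂ)) = k+1 := by
    simp
  have hvieta := Multiset.prod_X_sub_C_coeff
    (Finset.univ.val.map (Fin.cons p lam : Fin (k+1) → ℂ)) (k := k+1-i)
    (by rw [hcard]; omega)
  rw [Bpoly_prod hk hpq lam hinj hroot, hcard] at hvieta
  have h2 : k+1-(k+1-i) = i := by omega
  rw [h2] at hvieta
  -- coefficient of Bpoly
  have hco : (Bpoly k p q).coeff (k+1-i) = if i = 1 then -1 else 0 := by
    rw [Bpoly]
    rw [Polynomial.coeff_add, Polynomial.coeff_sub, Polynomial.coeff_X_pow,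
      Polynomial.coeff_X_pow, Polynomial.coeff_C]
    have hne1 : ¬ (k+1-i = k+1) := by omega
    have hne3 : ¬ (k+1-i = 0) := by omega
    rw [if_neg hne1, if_neg hne3]
    by_cases h : i = 1
    · rw [if_pos (by omega : k+1-i = k), if_pos h]; ring
    · rw [if_neg (by omega : ¬ (k+1-i = k)), if_neg h]; ring
  rw [hco] at hvieta
  -- hvieta : (if ..) = (-1)^i * esymm i
  have : (-1 : ℂ)^i * ((-1)^i * (Finset.univ.val.map (Fin.cons p lam : Fin (k+1) → ℂ)).esymm i)
      = (-1)^i * (if i = 1 then -1 else 0) := by rw [← hvieta]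
  rw [← mul_assoc, ← pow_add, Even.neg_one_pow ⟨i, rfl⟩, one_mul] at this
  rw [this]
  by_cases h : i = 1
  · subst h; simp
  · simp [h]

end

section
variable {k : ℕ} {p q : ℂ} (hk : 1 ≤ k) (hpq : p + q = 1) (lam : Fin k → ℂ)
  (hinj : Function.Injective lam)
  (hroot : ∀ j, (lam j) ^ k - ∑ i ∈ Finset.Icc 1 k, q * p ^ (i - 1) * (lam j) ^ (k - i) = 0)

include hk hpq hinj hroot in
lemma TT_newton : ∀ m, 0 < m →
    (∑ i : Fin (k+1), (Fin.cons p lam : Fin (k+1) → ℂ) i ^ m)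
      = (-1)^(m+1) * m * (Finset.univ.val.map (Fin.cons p lam : Fin (k+1) → ℂ)).esymm m
        - ∑ a ∈ (Finset.HasAntidiagonal.antidiagonal m).filter (fun a => a.1 ∈ Set.Ioo 0 m),
            (-1)^a.1 * (Finset.univ.val.map (Fin.cons p lam : Fin (k+1) → ℂ)).esymm a.1
              * ∑ i : Fin (k+1), (Fin.cons p lam : Fin (k+1) → ℂ) i ^ a.2 := by
  intro m hm
  have h0 := MvPolynomial.psum_eq_mul_esymm_sub_sum (Fin (k+1)) ℂ m hm
  have h1 := congrArg (MvPolynomial.aeval (Fin.cons p lam : Fin (k+1) → ℂ)) h0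
  simp only [map_sub, map_mul, map_sum, MvPolynomial.aeval_esymm_eq_multiset_esymm] at h1
  simpa [MvPolynomial.psum, MvPolynomial.aeval_esymm_eq_multiset_esymm] using h1

include hk hpq hinj hroot in
lemma TT_eq_one : ∀ m, 1 ≤ m → m ≤ k →
    (∑ i : Fin (k+1), (Fin.cons p lam : Fin (k+1) → ℂ) i ^ m) = 1 := by
  intro m
  induction m using Nat.strong_induction_on with
  | _ m ih =>
    intro hm1 hmk
    have hnew := TT_newton hk hpq lam hinj hroot m (by omega)
    rcases Nat.eq_or_lt_of_le hm1 with h1|h2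
    · -- m = 1
      subst h1
      have hemp : (Finset.HasAntidiagonal.antidiagonal 1).filter (fun a => a.1 ∈ Set.Ioo 0 1) = ∅ := by
        rw [Finset.filter_eq_empty_iff]
        intro a ha
        simp only [Set.mem_Ioo]
        have := Finset.HasAntidiagonal.mem_antidiagonal.mp ha
        omega
      rw [hemp, Finset.sum_empty, sub_zero,
        esymm_val hk hpq lam hinj hroot 1 le_rfl hmk] at hnew
      rw [hnew]
      norm_num
    · -- m ≥ 2
      have hm2 : 2 ≤ m := h2
      rw [esymm_val hk hpq lam hinj hroot m (by omega) hmk, if_neg (by omega)] at hnew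
      have hsum : ∑ a ∈ (Finset.HasAntidiagonal.antidiagonal m).filter (fun a => a.1 ∈ Set.Ioo 0 m),
          (-1:ℂ)^a.1 * (Finset.univ.val.map (Fin.cons p lam : Fin (k+1) → ℂ)).esymm a.1
            * ∑ i : Fin (k+1), (Fin.cons p lam : Fin (k+1) → ℂ) i ^ a.2
          = -1 := by
        rw [Finset.sum_eq_single (1, m-1)]
        · rw [esymm_val hk hpq lam hinj hroot 1 le_rfl (by omega), if_pos rfl]
          rw [ih (m-1) (by omega) (by omega) (by omega)]
          ring
        · intro a ha hne
          have hmem := Finset.HasAntidiagonal.mem_antidiagonal.mp (Finset.mem_filter.mp ha).1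
          have hIoo := (Finset.mem_filter.mp ha).2
          simp only [Set.mem_Ioo] at hIoo
          have ha2 : 2 ≤ a.1 := by
            rcases Nat.lt_or_ge a.1 2 with h|h
            · exfalso; apply hne
              have : a.1 = 1 := by omega
              have : a.2 = m - 1 := by omega
              exact Prod.ext (by omega) (by omega)
            · exact h
          rw [esymm_val hk hpq lam hinj hroot a.1 (by omega) (by omega), if_neg (by omega)]
          ring
        · intro hnotmem
          exfalso
          apply hnotmem
          rw [Finset.mem_filter]
          refine ⟨Finset.HasAntidiagonal.mem_antidiagonal.mpr (by omega), ?_⟩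
          simp only [Set.mem_Ioo]
          omega
      rw [hsum] at hnew
      rw [hnew]
      ring

end

end AlgPart


section TTrec
variable {k : ℕ} {p q : ℂ} (hk : 1 ≤ k) (hpq : p + q = 1) (lam : Fin k → ℂ)
  (hroot : ∀ j, (lam j) ^ k - ∑ i ∈ Finset.Icc 1 k, q * p ^ (i - 1) * (lam j) ^ (k - i) = 0)

include hpq hroot in
lemma consB : ∀ i : Fin (k+1),
    (Fin.cons p lam : Fin (k+1) → ℂ) i ^ (k+1)
      - (Fin.cons p lam : Fin (k+1) → ℂ) i ^ k + q * p ^ k = 0 := by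
  intro i
  refine Fin.cases ?_ ?_ i
  · simp only [Fin.cons_zero]
    linear_combination (p^k) * hpq
  · intro j
    simp only [Fin.cons_succ]
    have t := telescope k p q (lam j) hpq
    rw [hroot j, mul_zero] at t
    linear_combination -t

include hpq hroot in
lemma TT_rec : ∀ n : ℕ,
    (∑ i : Fin (k+1), (Fin.cons p lam : Fin (k+1) → ℂ) i ^ (n + (k+1)))
      = (∑ i : Fin (k+1), (Fin.cons p lam : Fin (k+1) → ℂ) i ^ (n + k))
        - q * p ^ k * ∑ i : Fin (k+1), (Fin.cons p lam : Fin (k+1) → ℂ) i ^ n := by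
  intro n
  have hterm : ∀ i : Fin (k+1),
      (Fin.cons p lam : Fin (k+1) → ℂ) i ^ (n + (k+1))
        = (Fin.cons p lam : Fin (k+1) → ℂ) i ^ (n + k)
          - q * p ^ k * (Fin.cons p lam : Fin (k+1) → ℂ) i ^ n := by
    intro i
    have hB := consB hpq lam hroot i
    linear_combination ((Fin.cons p lam : Fin (k+1) → ℂ) i ^ n) * hB
  rw [Finset.sum_congr rfl fun i _ => hterm i, Finset.sum_sub_distrib, ← Finset.mul_sum]

end TTrec


/-- Degenerate case `p = k/(k+1)`: `λ_0 = k/(k+1)` is a root of the auxiliary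
polynomial, and `f_k(n) = (p^k/(k+1)) (2 λ_0^{n-k} + Σ_{j≠0} λ_j^{n-k})` for `n ≥ k`. -/
theorem pmf_root_expansion_degenerate (k : ℕ) (hk : 1 ≤ k) (p q : ℝ)
    (hp : p = (k : ℝ) / (k + 1)) (hq : q = 1 - p) (lam : Fin k → ℂ)
    (hinj : Function.Injective lam)
    (hroot : ∀ j, (lam j) ^ k
      - ∑ i ∈ Finset.Icc 1 k, (q : ℂ) * (p : ℂ) ^ (i - 1) * (lam j) ^ (k - i) = 0)
    (hlam0 : lam ⟨0, hk⟩ = (k : ℂ) / (k + 1)) :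
    (((k : ℂ) / (k + 1)) ^ k
        - ∑ i ∈ Finset.Icc 1 k, (q : ℂ) * (p : ℂ) ^ (i - 1) * ((k : ℂ) / (k + 1)) ^ (k - i)
      = 0) ∧
      ∀ n, k ≤ n → (fk k p n : ℂ) = (p : ℂ) ^ k / (k + 1) *
        (2 * (lam ⟨0, hk⟩) ^ (n - k)
          + ∑ j ∈ Finset.univ \ {(⟨0, hk⟩ : Fin k)}, (lam j) ^ (n - k)) := by
  have hpqC : (p:ℂ) + (q:ℂ) = 1 := by rw [hq]; push_cast; ring
  have hk1R : ((k:ℝ) + 1) ≠ 0 := by positivity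
  have hk1C : ((k:ℂ) + 1) ≠ 0 := Nat.cast_add_one_ne_zero k
  have hqR : ((k:ℝ) + 1) * q = 1 := by rw [hq, hp]; field_simp; ring
  have hqC : ((k:ℂ) + 1) * (q:ℂ) = 1 := by exact_mod_cast congrArg (Complex.ofReal) hqR
  have hlam0' : lam ⟨0, hk⟩ = (p:ℂ) := by rw [hlam0, hp]; push_cast; ring
  constructor
  · have h0 := hroot ⟨0, hk⟩
    rwa [hlam0] at h0
  · intro n hn
    set μ : Fin (k+1) → ℂ := (Fin.cons (p:ℂ) lam) with hμ
    have hTT : ∀ d : ℕ, 2 * lam ⟨0,hk⟩ ^ d + ∑ j ∈ Finset.univ \ {(⟨0, hk⟩ : Fin k)}, lam j ^ d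
        = ∑ i : Fin (k+1), μ i ^ d := by
      intro d
      rw [hμ, Fin.sum_univ_succ]
      simp only [Fin.cons_zero, Fin.cons_succ]
      have e1 : ∑ j : Fin k, lam j ^ d
          = lam ⟨0,hk⟩ ^ d + ∑ j ∈ Finset.univ.erase ⟨0,hk⟩, lam j ^ d :=
        (Finset.add_sum_erase _ _ (Finset.mem_univ _)).symm
      rw [e1, ← Finset.erase_eq, hlam0']
      ring
    have hT0 : (∑ i : Fin (k+1), μ i ^ 0) = (k:ℂ) + 1 := by
      simp [hμ]
    have hkey : ∀ m : ℕ, ((gg k p m : ℝ) : ℂ) = ∑ i : Fin (k+1), μ i ^ (m+1) := by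
      intro m
      induction m using Nat.strong_induction_on with
      | _ m ih =>
        rcases lt_or_ge m k with hm|hm
        · rw [gg_lt_k k hk p m hm,
            TT_eq_one hk hpqC lam hinj hroot (m+1) (by omega) (by omega)]
          norm_num
        · obtain ⟨c, rfl⟩ : ∃ c, m = c + k := ⟨m - k, by omega⟩
          have hgs := gg_succ k hk p (c + k - 1)
          have hck : c + k - 1 + 1 = c + k := by omega
          rw [hck] at hgs
          rcases Nat.eq_zero_or_pos c with rfl|hc
          · have hzk : (0:ℕ) + k = k := Nat.zero_add k
            rw [hzk] at hgs ⊢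
            rw [fk_at_k k hk p, gg_lt_k k hk p (k-1) (by omega)] at hgs
            have hggk : (gg k p k : ℝ) = 1 - p^k := by linarith
            rw [hggk]
            have hrec := TT_rec hpqC lam hroot 0
            rw [Nat.zero_add, Nat.zero_add] at hrec
            rw [hrec, hT0, TT_eq_one hk hpqC lam hinj hroot k (by omega) le_rfl]
            push_cast
            have : (q:ℂ) * (p:ℂ)^k * ((k:ℂ)+1) = (p:ℂ)^k := by
              linear_combination ((p:ℂ)^k) * hqC
            linear_combination this
          · obtain ⟨c', rfl⟩ : ∃ c', c = c' + 1 := ⟨c - 1, by omega⟩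
            have he1 : c' + 1 + k - 1 = c' + k := by omega
            have he2 : c' + 1 + k = c' + (k+1) := by omega
            rw [he1] at hgs
            rw [he2] at hgs ⊢
            rw [fk_step k hk p c'] at hgs
            have hgg : (gg k p (c' + (k+1)) : ℝ) = gg k p (c' + k) - (1-p) * p^k * gg k p c' := by
              linarith
            rw [hgg]
            push_cast
            rw [ih (c' + k) (by omega), ih c' (by omega)]
            have hrec := TT_rec hpqC lam hroot (c' + 1)
            have he3 : c' + 1 + (k+1) = c' + (k+1) + 1 := by omega
            have he4 : c' + 1 + k = c' + k + 1 := by omega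
            rw [he3, he4] at hrec
            rw [hrec]
            have hqc : ((1:ℂ) - (p:ℂ)) = (q:ℂ) := by linear_combination -hpqC
            rw [hqc]
    rw [hTT (n-k)]
    rcases Nat.eq_or_lt_of_le hn with rfl|hlt
    · rw [Nat.sub_self, hT0, fk_at_k k hk p]
      push_cast
      field_simp
    · obtain ⟨a, rfl⟩ : ∃ a, n = a + (k+1) := ⟨n - (k+1), by omega⟩
      rw [fk_step k hk p a]
      have hnk : a + (k+1) - k = a + 1 := by omega
      rw [hnk]
      push_cast
      rw [hkey a]
      have hqc : ((1:ℂ) - (p:ℂ)) = (q:ℂ) := by linear_combination -hpqC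
      rw [hqc]
      have : (q:ℂ) = 1 / ((k:ℂ)+1) := by
        field_simp
        linear_combination hqC
      rw [this]
      ring
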